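/- Let x, y ∈ ℝ and A, B ∈ ℤ with |A − x·2^{p+2}| ≤ 1 and |B − y·2^{p+2}| ≤ 1. Let z = A + B and C = z/4 + (z mod 4)/2 computed with integer division (rounding toward zero) where z mod 4 ∈ {0,1,2,3} for nonnegative z and appropriately for negative z such that C is the nearest integer to z/4. Then |C − (x+y)·2^p| ≤ 1. -/
import Mathlib


theorem radd_correct
    (x y : ℝ) (p : ℤ) (A B : ℤ)
    (hA : |(A : ℝ) - x * 2 ^ (p + 2)| ≤ 1)
    (hB : |(B : ℝ) - y * 2 ^ (p + 2)| ≤ 1)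
    (z C : ℤ) (hz : z = A + B) (hC : C = z / 4 + (z % 4) / 2) :
    |(C : ℝ) - (x + y) * 2 ^ p| ≤ 1 := by
  have h4 : |(4 * C - z : ℤ)| ≤ 2 := by
    rw [abs_le]; omega
  have h4R : |((4 * C - z : ℤ) : ℝ)| ≤ 2 := by exact_mod_cast h4
  have hzR : ((z : ℤ) : ℝ) = (A : ℝ) + B := by rw [hz]; push_cast; ring
  push_cast at h4R
  have hp : (2 : ℝ) ^ (p + 2) = 2 ^ p * 4 := by
    rw [zpow_add₀ (by norm_num : (2:ℝ) ≠ 0)]; norm_num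
  have key : |4 * (C : ℝ) - (x + y) * 2 ^ (p + 2)| ≤ 4 := by
    have : 4 * (C : ℝ) - (x + y) * 2 ^ (p + 2)
        = (4 * (C : ℝ) - z) + ((A : ℝ) - x * 2 ^ (p + 2)) + ((B : ℝ) - y * 2 ^ (p + 2)) := by
      rw [hzR]; ring
    rw [this]
    calc |(4 * (C : ℝ) - z) + ((A : ℝ) - x * 2 ^ (p + 2)) + ((B : ℝ) - y * 2 ^ (p + 2))|
        ≤ |(4 * (C : ℝ) - z) + ((A : ℝ) - x * 2 ^ (p + 2))| + |(B : ℝ) - y * 2 ^ (p + 2)| :=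
          abs_add_le _ _
      _ ≤ |4 * (C : ℝ) - z| + |(A : ℝ) - x * 2 ^ (p + 2)| + |(B : ℝ) - y * 2 ^ (p + 2)| := by
          gcongr; exact abs_add_le _ _
      _ ≤ 2 + 1 + 1 := by gcongr
      _ = 4 := by norm_num
  have h4' : 4 * |(C : ℝ) - (x + y) * 2 ^ p| ≤ 4 := by
    calc 4 * |(C : ℝ) - (x + y) * 2 ^ p| = |4 * ((C : ℝ) - (x + y) * 2 ^ p)| := by
          rw [abs_mul, abs_of_nonneg (by norm_num : (0:ℝ) ≤ 4)]
      _ = |4 * (C : ℝ) - (x + y) * 2 ^ (p + 2)| := by rw [hp]; ring_nf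
      _ ≤ 4 := key
  linarith
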